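/- Let n be an integer with n ≡ 3 (mod 4) and n ≥ 3, and let m be an integer with m ≥ 3n + 5. Then for all pairwise distinct integers a, b, c, d ∈ {1, …, m} that all have the same parity (all odd or all even), the product of disjoint transpositions (a, b)(c, d) belongs to C(n, m). -/
import Mathlib

/-- The underlying function of the `n`-crossing permutation `π_j` over `{1, …, m}` (as a
function on `ℕ`): it sends `j + k` to `j + n - 1 - k` for `0 ≤ k ≤ n - 1` and fixes all
other points. -/
def crossFun (n j i : ℕ) : ℕ :=
  if j ≤ i ∧ i < j + n then 2 * j + n - 1 - i else i

lemma crossFun_involutive (n j : ℕ) : Function.Involutive (crossFun n j) := by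
  intro i
  unfold crossFun
  split_ifs <;> omega

/-- The `n`-crossing permutation `π_j`, viewed as a permutation of `ℕ` fixing every point
outside `{j, …, j + n - 1}`. -/
def crossPerm (n j : ℕ) : Equiv.Perm ℕ :=
  Function.Involutive.toPerm _ (crossFun_involutive n j)

/-- `C n m` is the subgroup of the symmetric group `S_m` (realized as permutations of `ℕ`
supported on `{1, …, m}`) generated by the `n`-crossing permutations `π_1, …, π_{m-n+1}`. -/
def C (n m : ℕ) : Subgroup (Equiv.Perm ℕ) :=
  Subgroup.closure {σ | ∃ j, 1 ≤ j ∧ j ≤ m - n + 1 ∧ σ = crossPerm n j}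

/-! ### Auxiliary development -/

/-- The 3-cycle `x → y → z → x` as a permutation of `ℕ`. -/
def cyc (x y z : ℕ) : Equiv.Perm ℕ := Equiv.swap x z * Equiv.swap x y

lemma cyc_inv (x y z : ℕ) : (cyc x y z)⁻¹ = cyc x z y := by
  simp [cyc, mul_inv_rev]

lemma crossPerm_apply (n j i : ℕ) : crossPerm n j i = crossFun n j i := rfl

lemma cyc_apply_def (x y z w : ℕ) (h1 : x ≠ y) (h2 : x ≠ z) (h3 : y ≠ z) :
    cyc x y z w = if w = x then y else if w = y then z else if w = z then x else w := by
  simp only [cyc, Equiv.Perm.mul_apply, Equiv.swap_apply_def]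
  split_ifs <;> omega

lemma cyc_apply₁ (x y z : ℕ) (h1 : y ≠ x) (h2 : y ≠ z) : cyc x y z x = y := by
  rw [cyc, Equiv.Perm.mul_apply, Equiv.swap_apply_left, Equiv.swap_apply_of_ne_of_ne h1 h2]

lemma cyc_apply₂ (x y z : ℕ) : cyc x y z y = z := by
  rw [cyc, Equiv.Perm.mul_apply, Equiv.swap_apply_right, Equiv.swap_apply_left]

lemma cyc_apply₃ (x y z : ℕ) (h1 : z ≠ x) (h2 : z ≠ y) : cyc x y z z = x := by
  rw [cyc, Equiv.Perm.mul_apply, Equiv.swap_apply_of_ne_of_ne h1 h2, Equiv.swap_apply_right]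

lemma cyc_apply_ne (x y z w : ℕ) (h1 : w ≠ x) (h2 : w ≠ y) (h3 : w ≠ z) : cyc x y z w = w := by
  rw [cyc, Equiv.Perm.mul_apply, Equiv.swap_apply_of_ne_of_ne h1 h2,
    Equiv.swap_apply_of_ne_of_ne h1 h3]

lemma cyc_rot (x y z : ℕ) (h1 : x ≠ y) (h2 : x ≠ z) (h3 : y ≠ z) :
    cyc x y z = cyc y z x := by
  ext i
  rw [cyc_apply_def x y z i h1 h2 h3, cyc_apply_def y z x i h3 (Ne.symm h1) (Ne.symm h2)]
  split_ifs <;> omega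

lemma cyc_conj (σ : Equiv.Perm ℕ) (x y z : ℕ) :
    σ * cyc x y z * σ⁻¹ = cyc (σ x) (σ y) (σ z) := by
  simp only [cyc]
  rw [Equiv.swap_apply_apply, Equiv.swap_apply_apply]
  group

lemma cyc_congr {a b c a' b' c' : ℕ} (h1 : a = a') (h2 : b = b') (h3 : c = c') :
    cyc a b c = cyc a' b' c' := by subst h1; subst h2; subst h3; rfl

lemma cyc_mul_special (a b c d : ℕ) (hab : a ≠ b) (hac : a ≠ c) (had : a ≠ d)
    (hbc : b ≠ c) (hbd : b ≠ d) (hcd : c ≠ d) :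
    cyc a b c * cyc d c b = cyc a b d := by
  ext i
  rw [Equiv.Perm.mul_apply, cyc_apply_def d c b i (Ne.symm hcd) (Ne.symm hbd) hbc.symm]
  rw [cyc_apply_def a b d i hab had hbd]
  split_ifs <;> (rw [cyc_apply_def a b c _ hab hac hbc]; split_ifs <;> omega)

lemma dd_eq (a b c d : ℕ) (hab : a ≠ b) (hac : a ≠ c) (had : a ≠ d)
    (hbc : b ≠ c) (hbd : b ≠ d) (hcd : c ≠ d) :
    Equiv.swap a b * Equiv.swap c d = cyc a c b * cyc a c d := by
  ext i
  simp only [Equiv.Perm.mul_apply, Equiv.swap_apply_def]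
  rw [cyc_apply_def a c d _ hac had hcd]
  split_ifs <;> (rw [cyc_apply_def a c b _ hac hab (Ne.symm hbc)]; split_ifs <;> omega)

lemma gen_mem {n m : ℕ} (hnm : n ≤ m) {j : ℕ} (h1 : 1 ≤ j) (h2 : j + n ≤ m + 1) :
    crossPerm n j ∈ C n m :=
  Subgroup.subset_closure ⟨j, h1, by omega, rfl⟩

/-- The product `π_{j+1} π_j π_{j+2} π_{j+3}`. -/
def Gel (n j : ℕ) : Equiv.Perm ℕ :=
  crossPerm n (j+1) * crossPerm n j * crossPerm n (j+2) * crossPerm n (j+3)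

lemma Gel_mem {n m : ℕ} (hnm : n ≤ m) {j : ℕ} (h1 : 1 ≤ j) (h2 : j + n + 2 ≤ m) :
    Gel n j ∈ C n m :=
  mul_mem (mul_mem (mul_mem (gen_mem hnm (by omega) (by omega))
    (gen_mem hnm h1 (by omega))) (gen_mem hnm (by omega) (by omega)))
    (gen_mem hnm (by omega) (by omega))

lemma u_apply (n : ℕ) (hn3 : 3 ≤ n) (j i : ℕ) :
    (crossPerm n (j+1) * crossPerm n j) i =
      if i = j+n-1 then j else if i = j+n then j+1 else
      if j ≤ i ∧ i ≤ j+n then i+2 else i := by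
  simp only [Equiv.Perm.mul_apply, crossPerm, Function.Involutive.coe_toPerm, crossFun]
  split_ifs <;> omega

lemma w_apply (n : ℕ) (hn3 : 3 ≤ n) (j i : ℕ) :
    (crossPerm n (j+2) * crossPerm n (j+3)) i =
      if i = j+2 then j+n+1 else if i = j+3 then j+n+2 else
      if j+4 ≤ i ∧ i ≤ j+n+2 then i-2 else i := by
  simp only [Equiv.Perm.mul_apply, crossPerm, Function.Involutive.coe_toPerm, crossFun]
  split_ifs <;> omega

set_option maxHeartbeats 1000000 in
lemma Gel_eq (n : ℕ) (hn3 : 3 ≤ n) (j : ℕ) :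
    Gel n j = cyc j (j+2) (j+n+1) * cyc (j+1) (j+3) (j+n+2) := by
  have h : Gel n j
      = (crossPerm n (j+1) * crossPerm n j) * (crossPerm n (j+2) * crossPerm n (j+3)) := by
    simp only [Gel, mul_assoc]
  ext i
  rw [h, Equiv.Perm.mul_apply, u_apply n hn3, w_apply n hn3, Equiv.Perm.mul_apply,
    cyc_apply_def _ _ _ _ (by omega) (by omega) (by omega),
    cyc_apply_def _ _ _ _ (by omega) (by omega) (by omega)]
  split_ifs <;> omega

lemma D_mem {n m : ℕ} (hn3 : 3 ≤ n) (hnm : n ≤ m) {r : ℕ} (hr : 1 ≤ r)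
    (hb : r + 2*n + 4 ≤ m) :
    cyc (r+1) (r+n+2) (r+n+4) ∈ C n m := by
  have hGA : Gel n (r+n+2) ∈ C n m := Gel_mem hnm (by omega) (by omega)
  have hGS : Gel n r ∈ C n m := Gel_mem hnm (by omega) (by omega)
  have hmem := mul_mem (mul_mem (mul_mem hGA hGS) (inv_mem hGA)) (inv_mem hGS)
  have hA : Gel n (r+n+2)
      = cyc (r+n+2) (r+n+4) (r+2*n+3) * cyc (r+n+3) (r+n+5) (r+2*n+4) := by
    rw [Gel_eq n hn3 (r+n+2),
      cyc_congr (rfl : r+n+2 = r+n+2) (show r+n+2+2 = r+n+4 by omega)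
        (show r+n+2+n+1 = r+2*n+3 by omega),
      cyc_congr (show r+n+2+1 = r+n+3 by omega) (show r+n+2+3 = r+n+5 by omega)
        (show r+n+2+n+2 = r+2*n+4 by omega)]
  have hS : Gel n r = cyc r (r+2) (r+n+1) * cyc (r+1) (r+3) (r+n+2) := Gel_eq n hn3 r
  rw [hA, hS] at hmem
  -- values of σ = S1 * S2
  have v1 : (cyc r (r+2) (r+n+1) * cyc (r+1) (r+3) (r+n+2)) (r+n+3) = r+n+3 := by
    rw [Equiv.Perm.mul_apply, cyc_apply_ne (r+1) (r+3) (r+n+2) (r+n+3) (by omega) (by omega) (by omega),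
      cyc_apply_ne r (r+2) (r+n+1) (r+n+3) (by omega) (by omega) (by omega)]
  have v2 : (cyc r (r+2) (r+n+1) * cyc (r+1) (r+3) (r+n+2)) (r+2*n+4) = r+2*n+4 := by
    rw [Equiv.Perm.mul_apply, cyc_apply_ne (r+1) (r+3) (r+n+2) (r+2*n+4) (by omega) (by omega) (by omega),
      cyc_apply_ne r (r+2) (r+n+1) (r+2*n+4) (by omega) (by omega) (by omega)]
  have v3 : (cyc r (r+2) (r+n+1) * cyc (r+1) (r+3) (r+n+2)) (r+n+5) = r+n+5 := by
    rw [Equiv.Perm.mul_apply, cyc_apply_ne (r+1) (r+3) (r+n+2) (r+n+5) (by omega) (by omega) (by omega),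
      cyc_apply_ne r (r+2) (r+n+1) (r+n+5) (by omega) (by omega) (by omega)]
  have v4 : (cyc r (r+2) (r+n+1) * cyc (r+1) (r+3) (r+n+2)) (r+n+2) = r+1 := by
    rw [Equiv.Perm.mul_apply, cyc_apply₃ (r+1) (r+3) (r+n+2) (by omega) (by omega),
      cyc_apply_ne r (r+2) (r+n+1) (r+1) (by omega) (by omega) (by omega)]
  have v5 : (cyc r (r+2) (r+n+1) * cyc (r+1) (r+3) (r+n+2)) (r+2*n+3) = r+2*n+3 := by
    rw [Equiv.Perm.mul_apply, cyc_apply_ne (r+1) (r+3) (r+n+2) (r+2*n+3) (by omega) (by omega) (by omega),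
      cyc_apply_ne r (r+2) (r+n+1) (r+2*n+3) (by omega) (by omega) (by omega)]
  have v6 : (cyc r (r+2) (r+n+1) * cyc (r+1) (r+3) (r+n+2)) (r+n+4) = r+n+4 := by
    rw [Equiv.Perm.mul_apply, cyc_apply_ne (r+1) (r+3) (r+n+2) (r+n+4) (by omega) (by omega) (by omega),
      cyc_apply_ne r (r+2) (r+n+1) (r+n+4) (by omega) (by omega) (by omega)]
  have heq : cyc (r+n+2) (r+n+4) (r+2*n+3) * cyc (r+n+3) (r+n+5) (r+2*n+4)
        * (cyc r (r+2) (r+n+1) * cyc (r+1) (r+3) (r+n+2))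
        * (cyc (r+n+2) (r+n+4) (r+2*n+3) * cyc (r+n+3) (r+n+5) (r+2*n+4))⁻¹
        * (cyc r (r+2) (r+n+1) * cyc (r+1) (r+3) (r+n+2))⁻¹
      = cyc (r+1) (r+n+2) (r+n+4) := by
    have hBconj : (cyc r (r+2) (r+n+1) * cyc (r+1) (r+3) (r+n+2))
          * (cyc (r+n+3) (r+n+5) (r+2*n+4))⁻¹
          * (cyc r (r+2) (r+n+1) * cyc (r+1) (r+3) (r+n+2))⁻¹
        = (cyc (r+n+3) (r+n+5) (r+2*n+4))⁻¹ := by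
      rw [cyc_inv, cyc_conj, v1, v2, v3]
    have hAconj : (cyc r (r+2) (r+n+1) * cyc (r+1) (r+3) (r+n+2))
          * (cyc (r+n+2) (r+n+4) (r+2*n+3))⁻¹
          * (cyc r (r+2) (r+n+1) * cyc (r+1) (r+3) (r+n+2))⁻¹
        = cyc (r+1) (r+2*n+3) (r+n+4) := by
      rw [cyc_inv, cyc_conj, v4, v5, v6]
    have expand : cyc (r+n+2) (r+n+4) (r+2*n+3) * cyc (r+n+3) (r+n+5) (r+2*n+4)
          * (cyc r (r+2) (r+n+1) * cyc (r+1) (r+3) (r+n+2))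
          * (cyc (r+n+2) (r+n+4) (r+2*n+3) * cyc (r+n+3) (r+n+5) (r+2*n+4))⁻¹
          * (cyc r (r+2) (r+n+1) * cyc (r+1) (r+3) (r+n+2))⁻¹
        = cyc (r+n+2) (r+n+4) (r+2*n+3) * cyc (r+n+3) (r+n+5) (r+2*n+4)
          * ((cyc r (r+2) (r+n+1) * cyc (r+1) (r+3) (r+n+2))
             * (cyc (r+n+3) (r+n+5) (r+2*n+4))⁻¹
             * (cyc r (r+2) (r+n+1) * cyc (r+1) (r+3) (r+n+2))⁻¹)
          * ((cyc r (r+2) (r+n+1) * cyc (r+1) (r+3) (r+n+2))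
             * (cyc (r+n+2) (r+n+4) (r+2*n+3))⁻¹
             * (cyc r (r+2) (r+n+1) * cyc (r+1) (r+3) (r+n+2))⁻¹) := by
      group
    rw [expand, hBconj, hAconj]
    have e2 : cyc (r+n+2) (r+n+4) (r+2*n+3) * cyc (r+n+3) (r+n+5) (r+2*n+4)
          * (cyc (r+n+3) (r+n+5) (r+2*n+4))⁻¹ * cyc (r+1) (r+2*n+3) (r+n+4)
        = cyc (r+n+2) (r+n+4) (r+2*n+3) * cyc (r+1) (r+2*n+3) (r+n+4) := by
      group
    rw [e2, cyc_mul_special (r+n+2) (r+n+4) (r+2*n+3) (r+1) (by omega) (by omega)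
      (by omega) (by omega) (by omega) (by omega),
      cyc_rot (r+n+2) (r+n+4) (r+1) (by omega) (by omega) (by omega),
      cyc_rot (r+n+4) (r+1) (r+n+2) (by omega) (by omega) (by omega)]
  rw [heq] at hmem
  exact hmem

/-- The reversal `i ↦ m + 1 - i` of `{1, …, m}`. -/
def RFun (m i : ℕ) : ℕ := if 1 ≤ i ∧ i ≤ m then m + 1 - i else i

lemma RFun_involutive (m : ℕ) : Function.Involutive (RFun m) := by
  intro i; unfold RFun; split_ifs <;> omega

def Rp (m : ℕ) : Equiv.Perm ℕ := Function.Involutive.toPerm _ (RFun_involutive m)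

lemma Rp_inv (m : ℕ) : (Rp m)⁻¹ = Rp m := rfl

lemma Rp_apply {m i : ℕ} (h1 : 1 ≤ i) (h2 : i ≤ m) : Rp m i = m + 1 - i := by
  show RFun m i = m + 1 - i
  unfold RFun
  rw [if_pos ⟨h1, h2⟩]

lemma R_conj_cross {n m : ℕ} (hn3 : 3 ≤ n) {j : ℕ} (h1 : 1 ≤ j) (h2 : j + n ≤ m + 1) :
    Rp m * crossPerm n j * (Rp m)⁻¹ = crossPerm n (m + 2 - n - j) := by
  rw [Rp_inv]
  ext i
  simp only [Equiv.Perm.mul_apply, crossPerm, Function.Involutive.coe_toPerm, crossFun,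
    Rp, RFun]
  split_ifs <;> omega

lemma R_mem {n m : ℕ} (hn3 : 3 ≤ n) (hnm : n ≤ m) {g : Equiv.Perm ℕ} (hg : g ∈ C n m) :
    Rp m * g * (Rp m)⁻¹ ∈ C n m := by
  induction hg using Subgroup.closure_induction with
  | mem x hx =>
      obtain ⟨j, hj1, hj2, rfl⟩ := hx
      rw [R_conj_cross hn3 hj1 (by omega)]
      exact Subgroup.subset_closure ⟨m + 2 - n - j, by omega, by omega, rfl⟩
  | one => simpa using one_mem (C n m)
  | mul x y hx hy ihx ihy =>
      have h : Rp m * (x * y) * (Rp m)⁻¹ = (Rp m * x * (Rp m)⁻¹) * (Rp m * y * (Rp m)⁻¹) := by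
        group
      rw [h]; exact mul_mem ihx ihy
  | inv x hx ihx =>
      have h : Rp m * x⁻¹ * (Rp m)⁻¹ = (Rp m * x * (Rp m)⁻¹)⁻¹ := by group
      rw [h]; exact inv_mem ihx

lemma step5 {n m : ℕ} (a b c d e : ℕ)
    (h1 : a ≠ b) (h2 : a ≠ c) (h3 : a ≠ d) (h4 : a ≠ e)
    (h5 : b ≠ c) (h6 : b ≠ d) (h7 : b ≠ e)
    (h8 : c ≠ d) (h9 : c ≠ e) (h10 : d ≠ e)
    (hx : cyc a b c ∈ C n m) (hy : cyc c d e ∈ C n m) :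
    cyc b c d ∈ C n m := by
  have hF : cyc a b c * cyc c d e ∈ C n m := mul_mem hx hy
  have hmem := mul_mem (mul_mem hF hx) (inv_mem hF)
  have e1 : (cyc a b c * cyc c d e) a = b := by
    rw [Equiv.Perm.mul_apply, cyc_apply_ne c d e a h2 h3 h4, cyc_apply₁ a b c h1.symm h5]
  have e2 : (cyc a b c * cyc c d e) b = c := by
    rw [Equiv.Perm.mul_apply, cyc_apply_ne c d e b h5 h6 h7, cyc_apply₂]
  have e3 : (cyc a b c * cyc c d e) c = d := by
    rw [Equiv.Perm.mul_apply, cyc_apply₁ c d e h8.symm h10,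
      cyc_apply_ne a b c d h3.symm h6.symm h8.symm]
  rwa [cyc_conj, e1, e2, e3] at hmem

lemma U_mem {n m : ℕ} (hn3 : 3 ≤ n) (hnm : n ≤ m) {y : ℕ} (h1 : n + 1 ≤ y)
    (h2 : y + n + 4 ≤ m) :
    cyc y (y+n+3) (y+2) ∈ C n m := by
  obtain ⟨r, hm', hr1⟩ : ∃ r, m = y + n + 3 + r ∧ 1 ≤ r := ⟨m - (y+n+3), by omega, by omega⟩
  have hD : cyc (r+1) (r+n+2) (r+n+4) ∈ C n m := D_mem hn3 hnm hr1 (by omega)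
  have hRC := R_mem hn3 hnm hD
  rw [cyc_conj, Rp_apply (i := r+1) (by omega) (by omega),
    Rp_apply (i := r+n+2) (by omega) (by omega),
    Rp_apply (i := r+n+4) (by omega) (by omega)] at hRC
  rw [show m+1-(r+1) = y+n+3 by omega, show m+1-(r+n+2) = y+2 by omega,
    show m+1-(r+n+4) = y by omega] at hRC
  rwa [cyc_rot (y+n+3) (y+2) y (by omega) (by omega) (by omega),
    cyc_rot (y+2) y (y+n+3) (by omega) (by omega) (by omega)] at hRC

lemma W_mem {n m : ℕ} (hn3 : 3 ≤ n) (hnm : n ≤ m) {x : ℕ} (hx : 2 ≤ x)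
    (hb : x + 2*n + 5 ≤ m) :
    cyc x (x+n+3) (x+2) ∈ C n m := by
  obtain ⟨r, rfl⟩ : ∃ r, x = r + 1 := ⟨x - 1, by omega⟩
  have hD1 : cyc (r+1) (r+n+2) (r+n+4) ∈ C n m := D_mem hn3 hnm (by omega) (by omega)
  have hD2 : cyc (r+3) (r+n+4) (r+n+6) ∈ C n m := by
    have h := D_mem (r := r+2) hn3 hnm (by omega) (by omega)
    rwa [show r+2+1 = r+3 by omega, show r+2+n+2 = r+n+4 by omega,
      show r+2+n+4 = r+n+6 by omega] at h
  have hs : cyc (r+n+2) (r+1) (r+n+4) ∈ C n m := by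
    have h1 : cyc (r+1) (r+n+4) (r+n+2) ∈ C n m := by
      rw [← cyc_inv (r+1) (r+n+2) (r+n+4)]; exact inv_mem hD1
    rwa [cyc_rot (r+1) (r+n+4) (r+n+2) (by omega) (by omega) (by omega),
      cyc_rot (r+n+4) (r+n+2) (r+1) (by omega) (by omega) (by omega)] at h1
  have ht : cyc (r+n+4) (r+3) (r+n+6) ∈ C n m := by
    have h1 : cyc (r+3) (r+n+6) (r+n+4) ∈ C n m := by
      rw [← cyc_inv (r+3) (r+n+4) (r+n+6)]; exact inv_mem hD2
    rwa [cyc_rot (r+3) (r+n+6) (r+n+4) (by omega) (by omega) (by omega),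
      cyc_rot (r+n+6) (r+n+4) (r+3) (by omega) (by omega) (by omega)] at h1
  have h := step5 (r+n+2) (r+1) (r+n+4) (r+3) (r+n+6) (by omega) (by omega) (by omega)
    (by omega) (by omega) (by omega) (by omega) (by omega) (by omega) (by omega) hs ht
  rwa [show r+1+n+3 = r+n+4 by omega, show r+1+2 = r+3 by omega]

lemma V_mem {n m : ℕ} (hn3 : 3 ≤ n) (hm : 3*n + 5 ≤ m) {y : ℕ} (h2 : 2 ≤ y)
    (hb : y + n + 4 ≤ m) :
    cyc y (y+n+3) (y+2) ∈ C n m := by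
  by_cases hc : y + 2*n + 5 ≤ m
  · exact W_mem hn3 (by omega) h2 hc
  · exact U_mem hn3 (by omega) (by omega) hb

lemma consec_low {n m : ℕ} (hn3 : 3 ≤ n) (hm : 3*n + 5 ≤ m) {y : ℕ} (h2 : 2 ≤ y)
    (hb : y + n + 6 ≤ m) :
    cyc y (y+2) (y+4) ∈ C n m := by
  have hV1 : cyc y (y+n+3) (y+2) ∈ C n m := V_mem hn3 hm h2 (by omega)
  have hV2 : cyc (y+2) (y+n+5) (y+4) ∈ C n m := by
    have h := V_mem (y := y+2) hn3 hm (by omega) (by omega)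
    rwa [show y+2+n+3 = y+n+5 by omega, show y+2+2 = y+4 by omega] at h
  have hs : cyc (y+n+3) y (y+2) ∈ C n m := by
    have h1 : cyc y (y+2) (y+n+3) ∈ C n m := by
      rw [← cyc_inv y (y+n+3) (y+2)]; exact inv_mem hV1
    rwa [cyc_rot y (y+2) (y+n+3) (by omega) (by omega) (by omega),
      cyc_rot (y+2) (y+n+3) y (by omega) (by omega) (by omega)] at h1
  have ht : cyc (y+2) (y+4) (y+n+5) ∈ C n m := by
    rw [← cyc_inv (y+2) (y+n+5) (y+4)]; exact inv_mem hV2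
  exact step5 (y+n+3) y (y+2) (y+4) (y+n+5) (by omega) (by omega) (by omega) (by omega)
    (by omega) (by omega) (by omega) (by omega) (by omega) (by omega) hs ht

lemma consec {n m : ℕ} (hn3 : 3 ≤ n) (hm : 3*n + 5 ≤ m) {y : ℕ} (h2 : 2 ≤ y)
    (hb : y + 5 ≤ m) :
    cyc y (y+2) (y+4) ∈ C n m := by
  by_cases hc : y + n + 6 ≤ m
  · exact consec_low hn3 hm h2 hc
  · have hy : n + 3 ≤ y := by omega
    have hl : cyc (m-3-y) (m-3-y+2) (m-3-y+4) ∈ C n m :=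
      consec_low hn3 hm (by omega) (by omega)
    have hR := R_mem hn3 (by omega) hl
    rw [cyc_conj, Rp_apply (i := m-3-y) (by omega) (by omega),
      Rp_apply (i := m-3-y+2) (by omega) (by omega),
      Rp_apply (i := m-3-y+4) (by omega) (by omega)] at hR
    rw [show m+1-(m-3-y) = y+4 by omega, show m+1-(m-3-y+2) = y+2 by omega,
      show m+1-(m-3-y+4) = y by omega] at hR
    rw [cyc_rot (y+4) (y+2) y (by omega) (by omega) (by omega),
      cyc_rot (y+2) y (y+4) (by omega) (by omega) (by omega)] at hR
    rw [show cyc y (y+2) (y+4) = (cyc y (y+4) (y+2))⁻¹ from by rw [cyc_inv]]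
    exact inv_mem hR

lemma gen_inner {n m : ℕ} (hn3 : 3 ≤ n) (hm : 3*n + 5 ≤ m) :
    ∀ z x y : ℕ, 2 ≤ x → x < y → y < z → z + 1 ≤ m → x % 2 = y % 2 → y % 2 = z % 2 →
      cyc x y z ∈ C n m := by
  intro z
  induction z using Nat.strong_induction_on with
  | _ z IH =>
    intro x y hx2 hxy hyz hzm hp1 hp2
    by_cases hz4 : z = x + 4
    · have hyx : y = x + 2 := by omega
      subst hyx; subst hz4
      exact consec hn3 hm hx2 (by omega)
    · have hz6 : x + 6 ≤ z := by omega
      obtain ⟨w, rfl⟩ : ∃ w, z = w + 4 := ⟨z - 4, by omega⟩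
      have hcons : cyc w (w+2) (w+4) ∈ C n m := consec hn3 hm (by omega) (by omega)
      by_cases hy1 : y = w + 2
      · subst hy1
        by_cases hxw : x = w
        · subst hxw; exact hcons
        · have hxw' : x < w := by omega
          have hIH : cyc x w (w+2) ∈ C n m :=
            IH (w+2) (by omega) x w hx2 hxw' (by omega) (by omega) (by omega) (by omega)
          have hval1 : (cyc w (w+2) (w+4)) x = x :=
            cyc_apply_ne _ _ _ _ (by omega) (by omega) (by omega)
          have hval2 : (cyc w (w+2) (w+4)) w = w+2 := cyc_apply₁ _ _ _ (by omega) (by omega)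
          have hval3 : (cyc w (w+2) (w+4)) (w+2) = w+4 := cyc_apply₂ _ _ _
          have hmem := mul_mem (mul_mem hcons hIH) (inv_mem hcons)
          rwa [cyc_conj, hval1, hval2, hval3] at hmem
      · by_cases hy2 : y = w
        · subst hy2
          have hxw' : x < y := hxy
          have hIH : cyc x y (y+2) ∈ C n m :=
            IH (y+2) (by omega) x y hx2 hxy (by omega) (by omega) (by omega) (by omega)
          have hs' : cyc y (y+4) (y+2) ∈ C n m := by
            rw [← cyc_inv y (y+2) (y+4)]; exact inv_mem hcons
          have hval1 : (cyc y (y+4) (y+2)) x = x :=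
            cyc_apply_ne _ _ _ _ (by omega) (by omega) (by omega)
          have hval2 : (cyc y (y+4) (y+2)) y = y+4 := cyc_apply₁ _ _ _ (by omega) (by omega)
          have hval3 : (cyc y (y+4) (y+2)) (y+2) = y := cyc_apply₃ _ _ _ (by omega) (by omega)
          have hmem := mul_mem (mul_mem hs' hIH) (inv_mem hs')
          rw [cyc_conj, hval1, hval2, hval3] at hmem
          rw [show cyc x y (y+4) = (cyc x (y+4) y)⁻¹ from by rw [cyc_inv]]
          exact inv_mem hmem
        · have hyw : y + 2 ≤ w := by omega
          have hIH : cyc x y (w+2) ∈ C n m :=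
            IH (w+2) (by omega) x y hx2 hxy (by omega) (by omega) hp1 (by omega)
          have hval1 : (cyc w (w+2) (w+4)) x = x :=
            cyc_apply_ne _ _ _ _ (by omega) (by omega) (by omega)
          have hval2 : (cyc w (w+2) (w+4)) y = y :=
            cyc_apply_ne _ _ _ _ (by omega) (by omega) (by omega)
          have hval3 : (cyc w (w+2) (w+4)) (w+2) = w+4 := cyc_apply₂ _ _ _
          have hmem := mul_mem (mul_mem hcons hIH) (inv_mem hcons)
          rwa [cyc_conj, hval1, hval2, hval3] at hmem

lemma unsort {n m : ℕ} (P : ℕ → Prop)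
    (H : ∀ x y z, P x → P y → P z → x % 2 = y % 2 → y % 2 = z % 2 → x < y → y < z →
      cyc x y z ∈ C n m) :
    ∀ x y z, P x → P y → P z → x ≠ y → x ≠ z → y ≠ z → x % 2 = y % 2 → y % 2 = z % 2 →
      cyc x y z ∈ C n m := by
  intro x y z Px Py Pz hxy hxz hyz h1 h2
  rcases Nat.lt_or_ge x y with h | h
  · rcases Nat.lt_or_ge y z with g | g
    · exact H x y z Px Py Pz h1 h2 h g
    · have g' : z < y := by omega
      rcases Nat.lt_or_ge x z with f | f
      · have hh := H x z y Px Pz Py (by omega) (by omega) f g'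
        rw [show cyc x y z = (cyc x z y)⁻¹ from by rw [cyc_inv]]
        exact inv_mem hh
      · have f' : z < x := by omega
        have hh := H z x y Pz Px Py (by omega) (by omega) f' h
        rwa [cyc_rot z x y (by omega) (by omega) (by omega)] at hh
  · have h' : y < x := by omega
    rcases Nat.lt_or_ge x z with g | g
    · have hh := H y x z Py Px Pz (by omega) (by omega) h' g
      have e : cyc x y z = (cyc y x z)⁻¹ := by
        rw [cyc_inv, cyc_rot y z x (by omega) (by omega) (by omega),
          cyc_rot z x y (by omega) (by omega) (by omega)]
      rw [e]; exact inv_mem hh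
    · have g' : z < x := by omega
      rcases Nat.lt_or_ge y z with f | f
      · have hh := H y z x Py Pz Px (by omega) (by omega) f g'
        rw [cyc_rot y z x (by omega) (by omega) (by omega)] at hh
        rwa [cyc_rot z x y (by omega) (by omega) (by omega)] at hh
      · have f' : z < y := by omega
        have hh := H z y x Pz Py Px (by omega) (by omega) f' h'
        have e : cyc x y z = (cyc z y x)⁻¹ := by
          rw [cyc_inv, cyc_rot z x y (by omega) (by omega) (by omega)]
        rw [e]; exact inv_mem hh

lemma inner_any {n m : ℕ} (hn3 : 3 ≤ n) (hm : 3*n + 5 ≤ m) :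
    ∀ x y z, (2 ≤ x ∧ x + 1 ≤ m) → (2 ≤ y ∧ y + 1 ≤ m) → (2 ≤ z ∧ z + 1 ≤ m) →
      x ≠ y → x ≠ z → y ≠ z → x % 2 = y % 2 → y % 2 = z % 2 → cyc x y z ∈ C n m :=
  unsort (fun t => 2 ≤ t ∧ t + 1 ≤ m)
    (fun x y z Px _ Pz p1 p2 l1 l2 => gen_inner hn3 hm z x y Px.1 l1 l2 Pz.2 p1 p2)

lemma fresh (m ρ a b p q s : ℕ) (hρ : ρ < 2) (hm14 : 14 ≤ m) :
    ∃ w, w % 2 = ρ ∧ 2 ≤ w ∧ w + 1 ≤ m ∧ w ≠ a ∧ w ≠ b ∧ w ≠ p ∧ w ≠ q ∧ w ≠ s := by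
  by_contra hcon
  have k : ∀ w, w % 2 = ρ → 2 ≤ w → w + 1 ≤ m → w = a ∨ w = b ∨ w = p ∨ w = q ∨ w = s := by
    intro w h1 h2 h3
    by_contra hk
    exact hcon ⟨w, h1, h2, h3, by omega, by omega, by omega, by omega, by omega⟩
  have k1 := k (ρ+2) (by omega) (by omega) (by omega)
  have k2 := k (ρ+4) (by omega) (by omega) (by omega)
  have k3 := k (ρ+6) (by omega) (by omega) (by omega)
  have k4 := k (ρ+8) (by omega) (by omega) (by omega)
  have k5 := k (ρ+10) (by omega) (by omega) (by omega)
  have k6 := k (ρ+12) (by omega) (by omega) (by omega)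
  omega

lemma one_ne_of_two_le {t : ℕ} (h : 2 ≤ t) : (1:ℕ) ≠ t := by omega

lemma m_ne_of_lt {m t : ℕ} (h : t + 1 ≤ m) : m ≠ t := by omega

set_option maxHeartbeats 1000000 in
lemma pair_move {n m : ℕ} (hn3 : 3 ≤ n) (hm : 3*n + 5 ≤ m) {a b p q : ℕ}
    (ha : 2 ≤ a ∧ a + 1 ≤ m) (hb : 2 ≤ b ∧ b + 1 ≤ m)
    (hp : 2 ≤ p ∧ p + 1 ≤ m) (hq : 2 ≤ q ∧ q + 1 ≤ m)
    (hab : a ≠ b) (hpq : p ≠ q)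
    (par1 : a % 2 = b % 2) (par2 : b % 2 = p % 2) (par3 : p % 2 = q % 2) :
    ∃ σ : Equiv.Perm ℕ, σ ∈ C n m ∧ σ a = p ∧ σ b = q ∧ σ 1 = 1 ∧ σ m = m := by
  have hm14 : 14 ≤ m := by omega
  have paq : a % 2 = q % 2 := (par1.trans par2).trans par3
  have pbq : b % 2 = q % 2 := par2.trans par3
  have pap : a % 2 = p % 2 := par1.trans par2
  by_cases hpa : p = a
  · by_cases hqb : q = b
    · exact ⟨1, one_mem _, by simp [hpa], by simp [hqb], rfl, rfl⟩
    · obtain ⟨w, hw1, hw2, hw3, hwa, hwb, hwp, hwq, -⟩ :=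
        fresh m (a % 2) a b p q q (Nat.mod_lt _ (by omega)) hm14
      have haq : a ≠ q := fun h => hpq (hpa.trans h)
      refine ⟨cyc b q w, inner_any hn3 hm b q w ⟨hb.1, hb.2⟩ ⟨hq.1, hq.2⟩ ⟨hw2, hw3⟩
        (fun h => hqb h.symm) hwb.symm hwq.symm pbq (pbq.symm.trans (par1.symm.trans hw1.symm)),
        ?_, ?_, ?_, ?_⟩
      · rw [cyc_apply_ne b q w a hab haq hwa.symm]; exact hpa.symm
      · exact cyc_apply₁ b q w hqb hwq.symm
      · exact cyc_apply_ne b q w 1 (one_ne_of_two_le hb.1) (one_ne_of_two_le hq.1)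
          (one_ne_of_two_le hw2)
      · exact cyc_apply_ne b q w m (m_ne_of_lt hb.2) (m_ne_of_lt hq.2) (m_ne_of_lt hw3)
  · by_cases hqb : q = b
    · obtain ⟨w, hw1, hw2, hw3, hwa, hwb, hwp, hwq, -⟩ :=
        fresh m (a % 2) a b p q q (Nat.mod_lt _ (by omega)) hm14
      have hbp : b ≠ p := fun h => hpq (hqb.trans h).symm
      refine ⟨cyc a p w, inner_any hn3 hm a p w ⟨ha.1, ha.2⟩ ⟨hp.1, hp.2⟩ ⟨hw2, hw3⟩
        (fun h => hpa h.symm) hwa.symm hwp.symm pap (pap.symm.trans hw1.symm),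
        ?_, ?_, ?_, ?_⟩
      · exact cyc_apply₁ a p w hpa hwp.symm
      · rw [cyc_apply_ne a p w b hab.symm hbp hwb.symm]; exact hqb.symm
      · exact cyc_apply_ne a p w 1 (one_ne_of_two_le ha.1) (one_ne_of_two_le hp.1)
          (one_ne_of_two_le hw2)
      · exact cyc_apply_ne a p w m (m_ne_of_lt ha.2) (m_ne_of_lt hp.2) (m_ne_of_lt hw3)
    · by_cases hpb : p = b
      · by_cases hqa : q = a
        · obtain ⟨w, hw1, hw2, hw3, hwa, hwb, hwp, hwq, -⟩ :=
            fresh m (a % 2) a b p q q (Nat.mod_lt _ (by omega)) hm14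
          obtain ⟨w', hv1, hv2, hv3, hva, hvb, hvp, hvq, hvw⟩ :=
            fresh m (a % 2) a b p q w (Nat.mod_lt _ (by omega)) hm14
          have hmem : Equiv.swap a b * Equiv.swap w w' ∈ C n m := by
            rw [dd_eq a b w w' hab hwa.symm hva.symm hwb.symm hvb.symm (Ne.symm hvw)]
            exact mul_mem
              (inner_any hn3 hm a w b ⟨ha.1, ha.2⟩ ⟨hw2, hw3⟩ ⟨hb.1, hb.2⟩
                hwa.symm hab hwb (hw1.symm) (hw1.trans par1))
              (inner_any hn3 hm a w w' ⟨ha.1, ha.2⟩ ⟨hw2, hw3⟩ ⟨hv2, hv3⟩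
                hwa.symm hva.symm hvw.symm (hw1.symm) (hw1.trans hv1.symm))
          refine ⟨Equiv.swap a b * Equiv.swap w w', hmem, ?_, ?_, ?_, ?_⟩
          · rw [Equiv.Perm.mul_apply, Equiv.swap_apply_of_ne_of_ne hwa.symm hva.symm,
              Equiv.swap_apply_left]; exact hpb.symm
          · rw [Equiv.Perm.mul_apply, Equiv.swap_apply_of_ne_of_ne hwb.symm hvb.symm,
              Equiv.swap_apply_right]; exact hqa.symm
          · rw [Equiv.Perm.mul_apply,
              Equiv.swap_apply_of_ne_of_ne (one_ne_of_two_le hw2) (one_ne_of_two_le hv2),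
              Equiv.swap_apply_of_ne_of_ne (one_ne_of_two_le ha.1) (one_ne_of_two_le hb.1)]
          · rw [Equiv.Perm.mul_apply,
              Equiv.swap_apply_of_ne_of_ne (m_ne_of_lt hw3) (m_ne_of_lt hv3),
              Equiv.swap_apply_of_ne_of_ne (m_ne_of_lt ha.2) (m_ne_of_lt hb.2)]
        · have hbq : b ≠ q := fun h => hqb h.symm
          refine ⟨cyc a b q, inner_any hn3 hm a b q ⟨ha.1, ha.2⟩ ⟨hb.1, hb.2⟩ ⟨hq.1, hq.2⟩
            hab (fun h => hqa h.symm) hbq par1 pbq, ?_, ?_, ?_, ?_⟩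
          · rw [cyc_apply₁ a b q hab.symm hbq]; exact hpb.symm
          · exact cyc_apply₂ a b q
          · exact cyc_apply_ne a b q 1 (one_ne_of_two_le ha.1) (one_ne_of_two_le hb.1)
              (one_ne_of_two_le hq.1)
          · exact cyc_apply_ne a b q m (m_ne_of_lt ha.2) (m_ne_of_lt hb.2) (m_ne_of_lt hq.2)
      · by_cases hqa : q = a
        · have hap : a ≠ p := fun h => hpa h.symm
          refine ⟨cyc b a p, inner_any hn3 hm b a p ⟨hb.1, hb.2⟩ ⟨ha.1, ha.2⟩ ⟨hp.1, hp.2⟩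
            hab.symm (fun h => hpb h.symm) hap par1.symm pap, ?_, ?_, ?_, ?_⟩
          · exact cyc_apply₂ b a p
          · rw [cyc_apply₁ b a p hab hap]; exact hqa.symm
          · exact cyc_apply_ne b a p 1 (one_ne_of_two_le hb.1) (one_ne_of_two_le ha.1)
              (one_ne_of_two_le hp.1)
          · exact cyc_apply_ne b a p m (m_ne_of_lt hb.2) (m_ne_of_lt ha.2) (m_ne_of_lt hp.2)
        · obtain ⟨w, hw1, hw2, hw3, hwa, hwb, hwp, hwq, -⟩ :=
            fresh m (a % 2) a b p q q (Nat.mod_lt _ (by omega)) hm14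
          obtain ⟨w', hv1, hv2, hv3, hva, hvb, hvp, hvq, hvw⟩ :=
            fresh m (a % 2) a b p q w (Nat.mod_lt _ (by omega)) hm14
          have hap : a ≠ p := fun h => hpa h.symm
          have haq : a ≠ q := fun h => hqa h.symm
          have hbq : b ≠ q := fun h => hqb h.symm
          have hbp : b ≠ p := fun h => hpb h.symm
          refine ⟨cyc a p w * cyc b q w', mul_mem
            (inner_any hn3 hm a p w ⟨ha.1, ha.2⟩ ⟨hp.1, hp.2⟩ ⟨hw2, hw3⟩
              hap hwa.symm hwp.symm pap (pap.symm.trans hw1.symm))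
            (inner_any hn3 hm b q w' ⟨hb.1, hb.2⟩ ⟨hq.1, hq.2⟩ ⟨hv2, hv3⟩
              hbq hvb.symm hvq.symm pbq (pbq.symm.trans (par1.symm.trans hv1.symm))),
            ?_, ?_, ?_, ?_⟩
          · rw [Equiv.Perm.mul_apply, cyc_apply_ne b q w' a hab haq hva.symm,
              cyc_apply₁ a p w hap.symm hwp.symm]
          · rw [Equiv.Perm.mul_apply, cyc_apply₁ b q w' hbq.symm hvq.symm,
              cyc_apply_ne a p w q haq.symm hpq.symm hwq.symm]
          · rw [Equiv.Perm.mul_apply,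
              cyc_apply_ne b q w' 1 (one_ne_of_two_le hb.1) (one_ne_of_two_le hq.1)
                (one_ne_of_two_le hv2),
              cyc_apply_ne a p w 1 (one_ne_of_two_le ha.1) (one_ne_of_two_le hp.1)
                (one_ne_of_two_le hw2)]
          · rw [Equiv.Perm.mul_apply,
              cyc_apply_ne b q w' m (m_ne_of_lt hb.2) (m_ne_of_lt hq.2) (m_ne_of_lt hv3),
              cyc_apply_ne a p w m (m_ne_of_lt ha.2) (m_ne_of_lt hp.2) (m_ne_of_lt hw3)]

lemma anchor_low {n m : ℕ} (hn3 : 3 ≤ n) (hm : 3*n + 5 ≤ m) :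
    cyc 1 (2*n+3) (n+2) ∈ C n m := by
  have hW : cyc n (2*n+3) (n+2) ∈ C n m := by
    have h : cyc n (n+n+3) (n+2) ∈ C n m := W_mem hn3 (by omega) (by omega) (by omega)
    rwa [show n+n+3 = 2*n+3 by omega] at h
  have hπ : crossPerm n 1 ∈ C n m := gen_mem (by omega) (by omega) (by omega)
  have v1 : crossPerm n 1 n = 1 := by
    rw [crossPerm_apply]; unfold crossFun; split_ifs <;> omega
  have v2 : crossPerm n 1 (2*n+3) = 2*n+3 := by
    rw [crossPerm_apply]; unfold crossFun; split_ifs <;> omega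
  have v3 : crossPerm n 1 (n+2) = n+2 := by
    rw [crossPerm_apply]; unfold crossFun; split_ifs <;> omega
  have hmem := mul_mem (mul_mem hπ hW) (inv_mem hπ)
  rwa [cyc_conj, v1, v2, v3] at hmem

lemma low {n m : ℕ} (hn2 : n % 2 = 1) (hn3 : 3 ≤ n) (hm : 3*n + 5 ≤ m) {p q : ℕ}
    (hpq : p ≠ q) (hp3 : 3 ≤ p) (hpm : p + 1 ≤ m) (hq3 : 3 ≤ q) (hqm : q + 1 ≤ m)
    (hpo : p % 2 = 1) (hqo : q % 2 = 1) : cyc 1 p q ∈ C n m := by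
  obtain ⟨σ, hσC, hσa, hσb, hσ1, hσm⟩ :=
    pair_move (a := 2*n+3) (b := n+2) (p := p) (q := q) hn3 hm
      ⟨by omega, by omega⟩ ⟨by omega, by omega⟩ ⟨by omega, by omega⟩ ⟨by omega, by omega⟩
      (by omega) hpq (by omega) (by omega) (by omega)
  have hmem := mul_mem (mul_mem hσC (anchor_low hn3 hm)) (inv_mem hσC)
  rwa [cyc_conj, hσ1, hσa, hσb] at hmem

lemma anchor_high {n m : ℕ} (hn3 : 3 ≤ n) (hm : 3*n + 5 ≤ m) :
    cyc m (m-2*n-2) (m-n-1) ∈ C n m := by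
  have hR := R_mem hn3 (by omega) (anchor_low hn3 hm)
  rw [cyc_conj, Rp_apply (i := 1) (by omega) (by omega),
    Rp_apply (i := 2*n+3) (by omega) (by omega),
    Rp_apply (i := n+2) (by omega) (by omega)] at hR
  rwa [show m+1-1 = m by omega, show m+1-(2*n+3) = m-2*n-2 by omega,
    show m+1-(n+2) = m-n-1 by omega] at hR

lemma both0 {n m : ℕ} (hn2 : n % 2 = 1) (hn3 : 3 ≤ n) (hm : 3*n + 5 ≤ m) {y : ℕ}
    (hy3 : 3 ≤ y) (hym : y + 2 ≤ m) (hyo : y % 2 = 1) (hmo : m % 2 = 1)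
    (hna1 : y ≠ m-2*n-2) (hna2 : y ≠ m-n-1) : cyc 1 y m ∈ C n m := by
  have hbase : cyc 1 y (m-n-1) ∈ C n m :=
    low hn2 hn3 hm hna2 hy3 (by omega) (by omega) (by omega) hyo (by omega)
  have hZ' := anchor_high hn3 hm
  have v1 : cyc m (m-2*n-2) (m-n-1) 1 = 1 :=
    cyc_apply_ne _ _ _ _ (by omega) (by omega) (by omega)
  have v2 : cyc m (m-2*n-2) (m-n-1) y = y := cyc_apply_ne _ _ _ _ (by omega) hna1 hna2
  have v3 : cyc m (m-2*n-2) (m-n-1) (m-n-1) = m := cyc_apply₃ _ _ _ (by omega) (by omega)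
  have hmem := mul_mem (mul_mem hZ' hbase) (inv_mem hZ')
  rwa [cyc_conj, v1, v2, v3] at hmem

lemma both {n m : ℕ} (hn2 : n % 2 = 1) (hn3 : 3 ≤ n) (hm : 3*n + 5 ≤ m) {y : ℕ}
    (hy3 : 3 ≤ y) (hym : y + 2 ≤ m) (hyo : y % 2 = 1) (hmo : m % 2 = 1) :
    cyc 1 y m ∈ C n m := by
  by_cases hcase : y ≠ m-2*n-2 ∧ y ≠ m-n-1
  · exact both0 hn2 hn3 hm hy3 hym hyo hmo hcase.1 hcase.2
  · obtain ⟨y₀, hy01, hy02, hy03, hy0a, hy0b, hy0c, -, -⟩ :=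
      fresh m 1 y (m-2*n-2) (m-n-1) y y (by omega) (by omega)
    have h0 : cyc 1 y₀ m ∈ C n m :=
      both0 hn2 hn3 hm (by omega) (by omega) (by omega) hmo hy0b hy0c
    obtain ⟨w, hww1, hww2, hww3, hwwa, hwwb, -, -, -⟩ :=
      fresh m 1 y y₀ y y₀ y (by omega) (by omega)
    have hσ : cyc y₀ y w ∈ C n m :=
      inner_any hn3 hm y₀ y w ⟨by omega, by omega⟩ ⟨by omega, by omega⟩ ⟨hww2, hww3⟩
        hy0a hwwb.symm hwwa.symm (by omega) (by omega)
    have v1 : cyc y₀ y w 1 = 1 := cyc_apply_ne _ _ _ _ (by omega) (by omega) (by omega)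
    have v2 : cyc y₀ y w y₀ = y := cyc_apply₁ _ _ _ hy0a.symm hwwa.symm
    have v3 : cyc y₀ y w m = m := cyc_apply_ne _ _ _ _ (by omega) (by omega) (by omega)
    have hmem := mul_mem (mul_mem hσ h0) (inv_mem hσ)
    rwa [cyc_conj, v1, v2, v3] at hmem

lemma cyc_mem_sorted {n m : ℕ} (hn2 : n % 2 = 1) (hn3 : 3 ≤ n) (hm : 3*n + 5 ≤ m)
    {x y z : ℕ} (hx1 : 1 ≤ x) (hxy : x < y) (hyz : y < z) (hzm : z ≤ m)
    (hp1 : x % 2 = y % 2) (hp2 : y % 2 = z % 2) : cyc x y z ∈ C n m := by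
  by_cases hz : z + 1 ≤ m
  · by_cases hx : 2 ≤ x
    · exact gen_inner hn3 hm z x y hx hxy hyz hz hp1 hp2
    · have hx1' : x = 1 := by omega
      subst hx1'
      exact low hn2 hn3 hm (by omega) (by omega) (by omega) (by omega) (by omega)
        (by omega) (by omega)
  · have hzm' : z = m := by omega
    rw [hzm']
    by_cases hx : 2 ≤ x
    · have hlow : cyc 1 (m+1-x) (m+1-y) ∈ C n m :=
        low hn2 hn3 hm (by omega) (by omega) (by omega) (by omega) (by omega)
          (by omega) (by omega)
      have hR := R_mem hn3 (by omega) hlow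
      rw [cyc_conj, Rp_apply (i := 1) (by omega) (by omega),
        Rp_apply (i := m+1-x) (by omega) (by omega),
        Rp_apply (i := m+1-y) (by omega) (by omega)] at hR
      rw [show m+1-1 = m by omega, show m+1-(m+1-x) = x by omega,
        show m+1-(m+1-y) = y by omega] at hR
      rwa [cyc_rot m x y (by omega) (by omega) (by omega)] at hR
    · have hx1' : x = 1 := by omega
      subst hx1'
      exact both hn2 hn3 hm (by omega) (by omega) (by omega) (by omega)

lemma cyc_mem_any {n m : ℕ} (hn2 : n % 2 = 1) (hn3 : 3 ≤ n) (hm : 3*n + 5 ≤ m) :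
    ∀ x y z, (1 ≤ x ∧ x ≤ m) → (1 ≤ y ∧ y ≤ m) → (1 ≤ z ∧ z ≤ m) →
      x ≠ y → x ≠ z → y ≠ z → x % 2 = y % 2 → y % 2 = z % 2 → cyc x y z ∈ C n m :=
  unsort (fun t => 1 ≤ t ∧ t ≤ m)
    (fun _ y _ Px _ Pz p1 p2 l1 l2 => cyc_mem_sorted hn2 hn3 hm Px.1 l1 l2 Pz.2 p1 p2)

theorem stmt9 (n : ℕ) (hn : n % 4 = 3) (hn3 : 3 ≤ n)
    (m : ℕ) (hm : 3 * n + 5 ≤ m)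
    (a b c d : ℕ)
    (ha1 : 1 ≤ a) (ham : a ≤ m) (hb1 : 1 ≤ b) (hbm : b ≤ m)
    (hc1 : 1 ≤ c) (hcm : c ≤ m) (hd1 : 1 ≤ d) (hdm : d ≤ m)
    (hab : a ≠ b) (hac : a ≠ c) (had : a ≠ d)
    (hbc : b ≠ c) (hbd : b ≠ d) (hcd : c ≠ d)
    (hpar : a % 2 = b % 2 ∧ b % 2 = c % 2 ∧ c % 2 = d % 2) :
    Equiv.swap a b * Equiv.swap c d ∈ C n m := by
  have hn2 : n % 2 = 1 := by omega
  obtain ⟨hp1, hp2, hp3⟩ := hpar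
  rw [dd_eq a b c d hab hac had hbc hbd hcd]
  exact mul_mem
    (cyc_mem_any hn2 hn3 hm a c b ⟨ha1, ham⟩ ⟨hc1, hcm⟩ ⟨hb1, hbm⟩ hac hab hbc.symm
      (by omega) (by omega))
    (cyc_mem_any hn2 hn3 hm a c d ⟨ha1, ham⟩ ⟨hc1, hcm⟩ ⟨hd1, hdm⟩ hac had hcd
      (by omega) (by omega))
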